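/- For any complex numbers b_0, b_1, ..., b_M with b_M ≠ 0, there exists c = (c_1, c_2, ...) ∈ ℂ^M (extended by zeros) such that Σ_{i=0}^{M} b_i s_i(t) = b_M s_M(t + c) as polynomials in t = (t_1, t_2, ...). -/

import Mathlib

open PowerSeries Finset

/-- `exp(c z^m)` as a formal power series: `∑_k c^k z^{mk} / k!`. -/
noncomputable def expMono (c : ℂ) (m : ℕ) : PowerSeries ℂ :=
  PowerSeries.mk fun k => if m ∣ k then c ^ (k / m) / (Nat.factorial (k / m) : ℂ) else 0

/-- The elementary Schur polynomial `s_j(t)`: the coefficient of `z^j` in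
`exp(∑_{i=1}^∞ t_i z^i)` (only the factors with `i ≤ j` contribute to this coefficient). -/
noncomputable def schur (t : ℕ → ℂ) (j : ℕ) : ℂ :=
  PowerSeries.coeff (R := ℂ) j (∏ i ∈ Finset.range j, expMono (t (i + 1)) (i + 1))

lemma coeff_expMono (c : ℂ) (m k : ℕ) :
    PowerSeries.coeff (R := ℂ) k (expMono c m)
      = if m ∣ k then c ^ (k / m) / (Nat.factorial (k / m) : ℂ) else 0 := by
  simp [expMono]

lemma coeff_expMono_zero (c : ℂ) (m : ℕ) : PowerSeries.coeff (R := ℂ) 0 (expMono c m) = 1 := by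
  simp [coeff_expMono]

lemma coeff_expMono_not_dvd (c : ℂ) {m k : ℕ} (h : ¬ m ∣ k) :
    PowerSeries.coeff (R := ℂ) k (expMono c m) = 0 := by
  simp [coeff_expMono, h]

lemma coeff_expMono_self (c : ℂ) {m : ℕ} (hm : 0 < m) :
    PowerSeries.coeff (R := ℂ) m (expMono c m) = c := by
  simp [coeff_expMono, Nat.div_self hm]

lemma sum_multiples (g : ℕ → ℂ) {m : ℕ} (hm : 0 < m) (K : ℕ) :
    ∑ i ∈ Finset.range (m * K + 1), (if m ∣ i then g i else 0)
      = ∑ I ∈ Finset.range (K + 1), g (m * I) := by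
  rw [← Finset.sum_filter]
  refine Finset.sum_nbij' (fun i => i / m) (fun I => m * I) ?_ ?_ ?_ ?_ ?_
  · intro a ha
    simp only [Finset.mem_filter, Finset.mem_range] at ha ⊢
    obtain ⟨h1, q, rfl⟩ := ha
    rw [Nat.mul_div_cancel_left _ hm]
    exact lt_of_not_ge fun h => by nlinarith [Nat.mul_le_mul_left m h]
  · intro a ha
    simp only [Finset.mem_filter, Finset.mem_range] at ha ⊢
    constructor
    · have := Nat.lt_succ_iff.mp ha
      exact Nat.lt_succ_of_le (Nat.mul_le_mul_left m this)
    · exact Dvd.intro a rfl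
  · intro a ha
    simp only [Finset.mem_filter] at ha
    exact Nat.mul_div_cancel' ha.2
  · intro a _
    exact Nat.mul_div_cancel_left a hm
  · intro a ha
    simp only [Finset.mem_filter] at ha
    rw [Nat.mul_div_cancel' ha.2]

lemma expMono_add (a b : ℂ) {m : ℕ} (hm : 0 < m) :
    expMono (a + b) m = expMono a m * expMono b m := by
  ext k
  rw [PowerSeries.coeff_mul, Finset.Nat.sum_antidiagonal_eq_sum_range_succ_mk, coeff_expMono]
  by_cases hk : m ∣ k
  · obtain ⟨K, rfl⟩ := hk
    rw [if_pos ⟨K, rfl⟩, Nat.mul_div_cancel_left _ hm]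
    have key : ∀ i ∈ Finset.range (m * K + 1),
        PowerSeries.coeff (R := ℂ) i (expMono a m) * PowerSeries.coeff (R := ℂ) (m * K - i) (expMono b m)
          = if m ∣ i then a ^ (i / m) / (Nat.factorial (i / m)) *
              (b ^ (K - i / m) / (Nat.factorial (K - i / m))) else 0 := by
      intro i hi
      simp only [Finset.mem_range, Nat.lt_succ_iff] at hi
      by_cases hdi : m ∣ i
      · obtain ⟨I, rfl⟩ := hdi
        have hIK : I ≤ K := Nat.le_of_mul_le_mul_left hi hm
        have hsub : m * K - m * I = m * (K - I) := by rw [Nat.mul_sub]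
        have d1 : m ∣ m * I := ⟨I, rfl⟩
        have d2 : m ∣ m * (K - I) := ⟨K - I, rfl⟩
        simp only [coeff_expMono, hsub, if_pos d1, if_pos d2,
          Nat.mul_div_cancel_left _ hm]
      · rw [if_neg hdi, coeff_expMono_not_dvd _ hdi, zero_mul]
    rw [Finset.sum_congr rfl key, sum_multiples _ hm K]
    simp only [Nat.mul_div_cancel_left _ hm]
    rw [Commute.add_pow (Commute.all a b), Finset.sum_div]
    refine Finset.sum_congr rfl fun I hI => ?_
    simp only [Finset.mem_range, Nat.lt_succ_iff] at hI
    have hfac : (Nat.factorial K : ℂ) = (Nat.choose K I) * (Nat.factorial I) * (Nat.factorial (K - I)) := by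
      rw_mod_cast [← Nat.choose_mul_factorial_mul_factorial hI]
    have h1 : (Nat.factorial I : ℂ) ≠ 0 := Nat.cast_ne_zero.mpr (Nat.factorial_ne_zero I)
    have h2 : (Nat.factorial (K - I) : ℂ) ≠ 0 := Nat.cast_ne_zero.mpr (Nat.factorial_ne_zero _)
    have h3 : (Nat.factorial K : ℂ) ≠ 0 := Nat.cast_ne_zero.mpr (Nat.factorial_ne_zero _)
    field_simp
    rw [hfac]
    ring
  · rw [if_neg hk]
    refine (Finset.sum_eq_zero fun i hi => ?_).symm
    simp only [Finset.mem_range, Nat.lt_succ_iff] at hi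
    by_cases hdi : m ∣ i
    · refine mul_eq_zero_of_right _ (coeff_expMono_not_dvd _ fun hd => hk ?_)
      have heq : i + (k - i) = k := by omega
      exact heq ▸ dvd_add hdi hd
    · rw [coeff_expMono_not_dvd _ hdi, zero_mul]

lemma coeff_prod_expMono (t : ℕ → ℂ) : ∀ {M j : ℕ}, j ≤ M →
    PowerSeries.coeff (R := ℂ) j (∏ i ∈ Finset.range M, expMono (t (i + 1)) (i + 1)) = schur t j := by
  intro M
  induction M with
  | zero => intro j hj; interval_cases j; rfl
  | succ M ih =>
    intro j hj
    rcases Nat.lt_succ_iff_lt_or_eq.mp (Nat.lt_succ_of_le hj) with h | rfl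
    · have hjM : j ≤ M := Nat.lt_succ_iff.mp h
      rw [Finset.prod_range_succ, PowerSeries.coeff_mul,
        Finset.Nat.sum_antidiagonal_eq_sum_range_succ_mk, Finset.sum_range_succ]
      have : ∀ i ∈ Finset.range j,
          PowerSeries.coeff (R := ℂ) i (∏ i ∈ Finset.range M, expMono (t (i + 1)) (i + 1)) *
            PowerSeries.coeff (R := ℂ) (j - i) (expMono (t (M + 1)) (M + 1)) = 0 := by
        intro i hi
        simp only [Finset.mem_range] at hi
        refine mul_eq_zero_of_right _ (coeff_expMono_not_dvd _ fun hd => ?_)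
        have h1 : 0 < j - i := by omega
        have h2 : j - i < M + 1 := by omega
        exact absurd (Nat.le_of_dvd h1 hd) (by omega)
      rw [Finset.sum_eq_zero this, Nat.sub_self, coeff_expMono_zero, mul_one, zero_add, ih hjM]
    · rfl

lemma schur_zero (t : ℕ → ℂ) : schur t 0 = 1 := by
  simp [schur]

lemma constantCoeff_prod_expMono (t : ℕ → ℂ) (n : ℕ) :
    PowerSeries.coeff (R := ℂ) 0 (∏ i ∈ Finset.range n, expMono (t (i + 1)) (i + 1)) = 1 := by
  rw [PowerSeries.coeff_zero_eq_constantCoeff, map_prod]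
  refine Finset.prod_eq_one fun i _ => ?_
  rw [← PowerSeries.coeff_zero_eq_constantCoeff]
  exact coeff_expMono_zero _ _

lemma schur_eq_add (t : ℕ → ℂ) {j : ℕ} (hj : 0 < j) :
    schur t j
      = PowerSeries.coeff (R := ℂ) j (∏ i ∈ Finset.range (j - 1), expMono (t (i + 1)) (i + 1)) + t j := by
  obtain ⟨n, rfl⟩ : ∃ n, j = n + 1 := ⟨j - 1, by omega⟩
  rw [schur, Finset.prod_range_succ, PowerSeries.coeff_mul,
    Finset.Nat.sum_antidiagonal_eq_sum_range_succ_mk, Finset.sum_range_succ]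
  simp only [Nat.add_sub_cancel]
  have hzero : ∀ i ∈ Finset.range (n + 1), i ≠ 0 →
      PowerSeries.coeff (R := ℂ) i (∏ i ∈ Finset.range n, expMono (t (i + 1)) (i + 1)) *
        PowerSeries.coeff (R := ℂ) (n + 1 - i) (expMono (t (n + 1)) (n + 1)) = 0 := by
    intro i hi hne
    simp only [Finset.mem_range] at hi
    refine mul_eq_zero_of_right _ (coeff_expMono_not_dvd _ fun hd => ?_)
    have h1 : 0 < n + 1 - i := by omega
    exact absurd (Nat.le_of_dvd h1 hd) (by omega)
  rw [Finset.sum_eq_single_of_mem 0 (Finset.mem_range.mpr (Nat.succ_pos n)) hzero,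
    constantCoeff_prod_expMono, Nat.sub_zero, coeff_expMono_self _ (Nat.succ_pos n),
    Nat.sub_self, coeff_expMono_zero, one_mul, mul_one, add_comm]

lemma schur_add_formula (t c : ℕ → ℂ) (M : ℕ) :
    schur (fun i => t i + c i) M
      = ∑ i ∈ Finset.range (M + 1), schur t i * schur c (M - i) := by
  have hprod : ∏ i ∈ Finset.range M, expMono (t (i + 1) + c (i + 1)) (i + 1)
      = (∏ i ∈ Finset.range M, expMono (t (i + 1)) (i + 1)) *
        ∏ i ∈ Finset.range M, expMono (c (i + 1)) (i + 1) := by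
    rw [← Finset.prod_mul_distrib]
    exact Finset.prod_congr rfl fun i _ => expMono_add _ _ (Nat.succ_pos i)
  rw [schur, hprod, PowerSeries.coeff_mul, Finset.Nat.sum_antidiagonal_eq_sum_range_succ_mk]
  refine Finset.sum_congr rfl fun i hi => ?_
  simp only [Finset.mem_range, Nat.lt_succ_iff] at hi
  rw [coeff_prod_expMono t hi, coeff_prod_expMono c (Nat.sub_le M i)]

noncomputable def solveC (M : ℕ) (a : ℕ → ℂ) : ℕ → ℂ
  | j =>
    if _h : M < j ∨ j = 0 then 0
    else a j - PowerSeries.coeff (R := ℂ) j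
      (∏ i ∈ (Finset.range (j - 1)).attach, expMono (solveC M a (↑i + 1)) (↑i + 1))
termination_by j => j
decreasing_by
  have := Finset.mem_range.mp i.2
  omega

lemma solveC_eq_zero (M : ℕ) (a : ℕ → ℂ) {j : ℕ} (h : M < j) : solveC M a j = 0 := by
  rw [solveC, dif_pos (Or.inl h)]

lemma schur_solveC (M : ℕ) (a : ℕ → ℂ) {j : ℕ} (h0 : 0 < j) (hM : j ≤ M) :
    schur (solveC M a) j = a j := by
  rw [schur_eq_add _ h0]
  conv_lhs => rw [solveC]
  rw [dif_neg (by omega), Finset.prod_attach (Finset.range (j - 1))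
    (fun i => expMono (solveC M a (i + 1)) (i + 1))]
  ring

/-- Any linear combination `∑_{i=0}^M b_i s_i(t)` with `b_M ≠ 0` equals
`b_M s_M(t + c)` for some `c ∈ ℂ^M` (extended by zeros). -/
theorem schur_shift_combination (M : ℕ) (b : ℕ → ℂ) (hb : b M ≠ 0) :
    ∃ c : ℕ → ℂ, (∀ i, M < i → c i = 0) ∧
      ∀ t : ℕ → ℂ,
        ∑ i ∈ Finset.range (M + 1), b i * schur t i
          = b M * schur (fun i => t i + c i) M := by
  refine ⟨solveC M (fun j => b (M - j) / b M), fun i hi => solveC_eq_zero M _ hi, fun t => ?_⟩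
  rw [schur_add_formula, Finset.mul_sum]
  refine Finset.sum_congr rfl fun i hi => ?_
  simp only [Finset.mem_range, Nat.lt_succ_iff] at hi
  rcases eq_or_lt_of_le hi with rfl | hlt
  · rw [Nat.sub_self, schur_zero, mul_one]
  · rw [schur_solveC M _ (by omega) (Nat.sub_le M i)]
    have : M - (M - i) = i := by omega
    rw [this]
    field_simp
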